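/- For the Riemann-Gaussian log-density log p_σ(X̃|X) = −‖ỸᵀỸ − YᵀY‖_F²/(4σ²) + C (with Ỹ, Y the centered coordinate matrices and C independent of X̃), the gradient with respect to X̃ equals −(1/σ²)·[(ỸỸᵀ)Ỹ − (ỸYᵀ)Y]. -/

import Mathlib

open Matrix BigOperators

/-- Column mean of a coordinate matrix. -/
noncomputable def colMean {N : ℕ} (X : Matrix (Fin 3) (Fin N) ℝ) (i : Fin 3) : ℝ :=
  (∑ j, X i j) / N

/-- Center a coordinate matrix by subtracting the column mean from every column. -/
noncomputable def center {N : ℕ} (X : Matrix (Fin 3) (Fin N) ℝ) : Matrix (Fin 3) (Fin N) ℝ :=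
  Matrix.of fun i j => X i j - colMean X i

/-- Translation of every column by a vector `t`, i.e. `X + t·1ᵀ`. -/
def transl {N : ℕ} (t : Fin 3 → ℝ) (X : Matrix (Fin 3) (Fin N) ℝ) : Matrix (Fin 3) (Fin N) ℝ :=
  Matrix.of fun i j => X i j + t i

/-- Frobenius norm of a real matrix. -/
noncomputable def frob {m n : ℕ} (M : Matrix (Fin m) (Fin n) ℝ) : ℝ :=
  Real.sqrt (∑ i, ∑ j, (M i j) ^ 2)

/-- The gradient of a scalar function of a matrix, as the matrix of partial derivatives. -/
noncomputable def matGrad {N : ℕ} (f : Matrix (Fin 3) (Fin N) ℝ → ℝ)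
    (X : Matrix (Fin 3) (Fin N) ℝ) : Matrix (Fin 3) (Fin N) ℝ :=
  Matrix.of fun i j => deriv (fun s : ℝ => f (X + s • Matrix.single i j 1)) 0

attribute [local instance] Matrix.frobeniusNormedAddCommGroup Matrix.frobeniusNormedSpace

lemma frob_sq {m n : ℕ} (M : Matrix (Fin m) (Fin n) ℝ) :
    frob M ^ 2 = ∑ a, ∑ b, (M a b) ^ 2 :=
  Real.sq_sqrt (by positivity)

lemma center_rowsum {N : ℕ} (X : Matrix (Fin 3) (Fin N) ℝ) (c : Fin 3) :
    ∑ a, center X c a = 0 := by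
  rcases Nat.eq_zero_or_pos N with h | h
  · subst h; simp
  · simp only [center, Matrix.of_apply, colMean, Finset.sum_sub_distrib,
      Finset.sum_const, Finset.card_fin, nsmul_eq_mul]
    field_simp
    ring

lemma center_add_smul {N : ℕ} (X E : Matrix (Fin 3) (Fin N) ℝ) (s : ℝ) (i : Fin 3) (j : Fin N) :
    center (X + s • E) i j = center X i j + s * center E i j := by
  simp only [center, Matrix.of_apply, colMean, Matrix.add_apply, Matrix.smul_apply,
    smul_eq_mul, Finset.sum_add_distrib, ← Finset.mul_sum, add_div, mul_div_assoc]
  ring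

lemma center_std {N : ℕ} (i c : Fin 3) (j a : Fin N) :
    center (Matrix.single i j (1:ℝ)) c a
      = if c = i then ((if a = j then (1:ℝ) else 0) - 1 / N) else 0 := by
  simp only [center, Matrix.of_apply, colMean, Matrix.single]
  rcases eq_or_ne c i with rfl | h
  · simp [Finset.sum_ite_eq', one_div, eq_comm]
  · simp [h, Ne.symm]

theorem stmt6 {N : ℕ} (σ : ℝ) (hσ : 0 < σ) (C : ℝ) (Xt X : Matrix (Fin 3) (Fin N) ℝ) :
    matGrad (fun Z => -(frob ((center Z)ᵀ * center Z - (center X)ᵀ * center X)) ^ 2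
        / (4 * σ ^ 2) + C) Xt =
      -(1 / σ ^ 2) • ((center Xt * (center Xt)ᵀ) * center Xt
        - (center Xt * (center X)ᵀ) * center X) := by
  funext i j
  set Y := center Xt with hY
  set Xc := center X with hXc
  set F := center (Matrix.single i j (1:ℝ)) with hF
  set A : Matrix (Fin N) (Fin N) ℝ := Xcᵀ * Xc with hA
  set S : Fin N → Fin N → ℝ := fun a b => (∑ c, Y c a * Y c b) - A a b with hS
  set w : Fin N → ℝ := fun a => (if a = j then (1:ℝ) else 0) - 1 / N with hw
  -- entrywise description of the matrix inside frob
  have hentry : ∀ (s : ℝ) (a b : Fin N),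
      (((center (Xt + s • Matrix.single i j 1))ᵀ
          * center (Xt + s • Matrix.single i j 1) - Xcᵀ * Xc
          : Matrix (Fin N) (Fin N) ℝ) a b)
        = (∑ c, (Y c a + s * F c a) * (Y c b + s * F c b)) - A a b := by
    intro s a b
    simp only [Matrix.sub_apply, Matrix.mul_apply, Matrix.transpose_apply,
      center_add_smul, hY, hF, hA]
  -- derivative of the squared-Frobenius-norm part
  have hD : HasDerivAt
      (fun s : ℝ => ∑ a, ∑ b,
        ((∑ c, (Y c a + s * F c a) * (Y c b + s * F c b)) - A a b) ^ 2)
      (∑ a, ∑ b, 2 * S a b * (∑ c, (F c a * Y c b + Y c a * F c b))) 0 := by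
    apply HasDerivAt.fun_sum; intro a _
    apply HasDerivAt.fun_sum; intro b _
    have h1 : HasDerivAt
        (fun s : ℝ => (∑ c, (Y c a + s * F c a) * (Y c b + s * F c b)) - A a b)
        (∑ c, (F c a * Y c b + Y c a * F c b)) 0 := by
      apply HasDerivAt.sub_const
      apply HasDerivAt.fun_sum; intro c _
      have ha : HasDerivAt (fun s : ℝ => Y c a + s * F c a) (F c a) 0 := by
        simpa using ((hasDerivAt_id (0:ℝ)).mul_const (F c a)).const_add (Y c a)
      have hb : HasDerivAt (fun s : ℝ => Y c b + s * F c b) (F c b) 0 := by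
        simpa using ((hasDerivAt_id (0:ℝ)).mul_const (F c b)).const_add (Y c b)
      simpa using ha.fun_mul hb
    have h2 := h1.fun_pow 2
    simpa [hS] using h2
  -- the function whose deriv we take
  have hfun : (fun s : ℝ =>
      -frob ((center (Xt + s • Matrix.single i j 1))ᵀ
          * center (Xt + s • Matrix.single i j 1) - Xcᵀ * Xc) ^ 2 / (4 * σ ^ 2) + C)
      = fun s : ℝ => -(∑ a, ∑ b,
          ((∑ c, (Y c a + s * F c a) * (Y c b + s * F c b)) - A a b) ^ 2) / (4 * σ ^ 2) + C := by
    funext s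
    rw [show -frob ((center (Xt + s • Matrix.single i j 1))ᵀ
          * center (Xt + s • Matrix.single i j 1) - Xcᵀ * Xc) ^ 2
        = -(frob ((center (Xt + s • Matrix.single i j 1))ᵀ
          * center (Xt + s • Matrix.single i j 1) - Xcᵀ * Xc) ^ 2) by ring,
      frob_sq]
    congr 3
    exact Finset.sum_congr rfl fun a _ => Finset.sum_congr rfl fun b _ => by rw [hentry]
  have hderiv := (((hD.neg).div_const (4 * σ ^ 2)).add_const C).deriv
  -- compute the LHS entry
  have hLHS : matGrad (fun Z => -(frob ((center Z)ᵀ * center Z - Xcᵀ * Xc)) ^ 2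
        / (4 * σ ^ 2) + C) Xt i j
      = -(∑ a, ∑ b, 2 * S a b * (∑ c, (F c a * Y c b + Y c a * F c b))) / (4 * σ ^ 2) := by
    simp only [matGrad, Matrix.of_apply]
    rw [hfun]
    exact hderiv
  -- sums of rows/columns of S vanish
  have hScol : ∀ b, ∑ a, S a b = 0 := by
    intro b
    simp only [hS, hA, Matrix.mul_apply, Matrix.transpose_apply, Finset.sum_sub_distrib]
    rw [Finset.sum_comm, Finset.sum_comm (f := fun a c => Xc c a * Xc c b)]
    simp only [← Finset.sum_mul]
    simp [hY, hXc, center_rowsum]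
  have hSrow : ∀ a, ∑ b, S a b = 0 := by
    intro a
    simp only [hS, hA, Matrix.mul_apply, Matrix.transpose_apply, Finset.sum_sub_distrib]
    rw [Finset.sum_comm, Finset.sum_comm (f := fun b c => Xc c a * Xc c b)]
    simp only [← Finset.mul_sum]
    simp [hY, hXc, center_rowsum]
  have hSsym : ∀ a b, S a b = S b a := by
    intro a b
    simp only [hS, hA, Matrix.mul_apply, Matrix.transpose_apply]
    congr 1
    · exact Finset.sum_congr rfl fun c _ => by ring
    · exact Finset.sum_congr rfl fun c _ => by ring
  have hFsum1 : ∀ (a b : Fin N), ∑ c, F c a * Y c b = w a * Y i b := by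
    intro a b
    simp [hF, center_std, hw, ite_mul, zero_mul, Finset.sum_ite_eq']
  have hFsum2 : ∀ (a b : Fin N), ∑ c, Y c a * F c b = w b * Y i a := by
    intro a b
    have : ∀ c, Y c a * F c b = F c b * Y c a := fun c => mul_comm _ _
    simp only [this]
    simp [hF, center_std, hw, ite_mul, zero_mul, Finset.sum_ite_eq']
  have hwsum : ∀ g : Fin N → ℝ, (∑ a, g a) = 0 → ∑ a, w a * g a = g j := by
    intro g hg
    simp only [hw, sub_mul, ite_mul, one_mul, zero_mul, Finset.sum_sub_distrib,
      Finset.sum_ite_eq', Finset.mem_univ, if_true, ← Finset.mul_sum, hg, mul_zero, sub_zero]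
  have hz1 : ∑ a, ∑ b, (2:ℝ) * (S a b * Y i b) = 0 := by
    rw [Finset.sum_comm]
    refine Finset.sum_eq_zero fun b _ => ?_
    have : ∑ a, (2:ℝ) * (S a b * Y i b) = (∑ a, S a b) * (2 * Y i b) := by
      rw [Finset.sum_mul]; exact Finset.sum_congr rfl fun a _ => by ring
    rw [this, hScol, zero_mul]
  have hz2 : ∑ b, ∑ a, (2:ℝ) * (S a b * Y i a) = 0 := by
    rw [Finset.sum_comm]
    refine Finset.sum_eq_zero fun a _ => ?_
    have : ∑ b, (2:ℝ) * (S a b * Y i a) = (∑ b, S a b) * (2 * Y i a) := by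
      rw [Finset.sum_mul]; exact Finset.sum_congr rfl fun b _ => by ring
    rw [this, hSrow, zero_mul]
  -- the derivative value simplifies
  have hDval : (∑ a, ∑ b, 2 * S a b * (∑ c, (F c a * Y c b + Y c a * F c b)))
      = 4 * ∑ a, Y i a * S a j := by
    have e : ∀ a b : Fin N, 2 * S a b * (∑ c, (F c a * Y c b + Y c a * F c b))
        = w a * (2 * (S a b * Y i b)) + w b * (2 * (S a b * Y i a)) := by
      intro a b
      rw [Finset.sum_add_distrib, hFsum1, hFsum2]; ring
    calc (∑ a, ∑ b, 2 * S a b * (∑ c, (F c a * Y c b + Y c a * F c b)))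
        = ∑ a, ∑ b, (w a * (2 * (S a b * Y i b)) + w b * (2 * (S a b * Y i a))) :=
          Finset.sum_congr rfl fun a _ => Finset.sum_congr rfl fun b _ => e a b
      _ = (∑ a, w a * (∑ b, 2 * (S a b * Y i b)))
          + (∑ b, w b * (∑ a, 2 * (S a b * Y i a))) := by
          simp only [Finset.sum_add_distrib]
          congr 1
          · exact Finset.sum_congr rfl fun a _ => by rw [Finset.mul_sum]
          · rw [Finset.sum_comm]
            exact Finset.sum_congr rfl fun b _ => by rw [Finset.mul_sum]
      _ = (∑ b, 2 * (S j b * Y i b)) + (∑ a, 2 * (S a j * Y i a)) := by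
          congr 1
          · exact hwsum _ hz1
          · exact hwsum _ hz2
      _ = 4 * ∑ a, Y i a * S a j := by
          rw [show (∑ b, (2:ℝ) * (S j b * Y i b)) = ∑ b, 2 * (S b j * Y i b) from
            Finset.sum_congr rfl fun b _ => by rw [hSsym], Finset.mul_sum,
            ← Finset.sum_add_distrib]
          exact Finset.sum_congr rfl fun a _ => by ring
  have e1 : ∑ a, Y i a * (∑ c, Y c a * Y c j) = (Y * Yᵀ * Y) i j := by
    simp only [Matrix.mul_apply, Matrix.transpose_apply, Finset.mul_sum, Finset.sum_mul]
    rw [Finset.sum_comm]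
    exact Finset.sum_congr rfl fun c _ => Finset.sum_congr rfl fun a _ => by ring
  have e2 : ∑ a, Y i a * A a j = (Y * Xcᵀ * Xc) i j := by
    simp only [hA, Matrix.mul_apply, Matrix.transpose_apply, Finset.mul_sum, Finset.sum_mul]
    rw [Finset.sum_comm]
    exact Finset.sum_congr rfl fun c _ => Finset.sum_congr rfl fun a _ => by ring
  have hΔ : ∑ a, Y i a * S a j = (Y * Yᵀ * Y) i j - (Y * Xcᵀ * Xc) i j := by
    simp only [hS, mul_sub, Finset.sum_sub_distrib]
    rw [e1, e2]
  rw [hLHS, hDval, hΔ]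
  have hRHS : (-((1:ℝ) / σ ^ 2) • (Y * Yᵀ * Y - Y * Xcᵀ * Xc) : Matrix (Fin 3) (Fin N) ℝ) i j
      = -(1 / σ ^ 2) * ((Y * Yᵀ * Y) i j - (Y * Xcᵀ * Xc) i j) := by
    simp [Matrix.smul_apply, Matrix.sub_apply]
  rw [hRHS]
  have hσ' : σ ≠ 0 := ne_of_gt hσ
  field_simp
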